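/- Let t ≥ 1 be an integer. If P = [0:p_1:p_2] ∈ P^2 with p_1 p_2 ≠ 0, then I(P) ⋆ 𝔪^t = ⟨x_0⟩ + ⟨x_1, x_2⟩^t. If P = [0:0:1], then I(P) ⋆ 𝔪^t = ⟨x_0, x_1⟩ + ⟨x_2^t⟩. -/

import Mathlib

open MvPolynomial

noncomputable section

variable {K : Type*} [Field K]

/-- The Hadamard product of two ideals `I, J ⊆ K[x_0,x_1,x_2]`: introduce new variables
`y_0,y_1,y_2` and `z_0,z_1,z_2` (encoded via a sum type), map `I` via `x_i ↦ y_i`, `J` via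
`x_i ↦ z_i`, add the relations `x_i − y_i z_i`, and eliminate `y, z` (i.e. take the
preimage in `K[x_0,x_1,x_2]`). -/
def hadamard (I J : Ideal (MvPolynomial (Fin 3) K)) : Ideal (MvPolynomial (Fin 3) K) :=
  Ideal.comap
    (rename (Sum.inl : Fin 3 → Fin 3 ⊕ (Fin 3 ⊕ Fin 3)))
    (Ideal.map (rename (fun i : Fin 3 => (Sum.inr (Sum.inl i) : Fin 3 ⊕ (Fin 3 ⊕ Fin 3)))) I
      + Ideal.map (rename (fun i : Fin 3 => (Sum.inr (Sum.inr i) : Fin 3 ⊕ (Fin 3 ⊕ Fin 3)))) J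
      + Ideal.span { f | ∃ i : Fin 3,
          f = X (Sum.inl i) - X (Sum.inr (Sum.inl i)) * X (Sum.inr (Sum.inr i)) })

/-- The homogeneous vanishing ideal of the point `P = [p_0:p_1:p_2] ∈ ℙ²`, generated by
the forms `p_j x_i − p_i x_j`. -/
def pointIdeal (p : Fin 3 → K) : Ideal (MvPolynomial (Fin 3) K) :=
  Ideal.span { f | ∃ i j : Fin 3, f = C (p j) * X i - C (p i) * X j }

/-- The irrelevant ideal `𝔪 = ⟨x_0,x_1,x_2⟩` of `K[x_0,x_1,x_2]`. -/
def irrelevantIdeal (K : Type*) [Field K] : Ideal (MvPolynomial (Fin 3) K) :=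
  Ideal.span (Set.range X)

/-- Membership in `P + Q` via a retraction `e` that kills `P` and preserves `Q`. -/
lemma mem_add_iff_of_retract {R : Type*} [CommRing R] {S : Type*} [CommSemiring S] [Algebra S R]
    (e : R →ₐ[S] R) (P Q : Ideal R)
    (h1 : ∀ g, g - e g ∈ P) (h2 : Ideal.map e P ≤ Q) (h3 : Ideal.map e Q ≤ Q) (g : R) :
    g ∈ P + Q ↔ e g ∈ Q := by
  constructor
  · intro hg
    have : e g ∈ Ideal.map e (P + Q) := Ideal.mem_map_of_mem e hg
    rw [Ideal.add_eq_sup, Ideal.map_sup] at this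
    exact sup_le h2 h3 this
  · intro hg
    have : g = (g - e g) + e g := by ring
    rw [this, Ideal.add_eq_sup]
    exact Submodule.add_mem_sup (h1 g) hg

/-- If `X i - v i ∈ P` for all `i`, then `g - aeval v g ∈ P` for all `g`. -/
lemma sub_aeval_mem {σ : Type*} (v : σ → MvPolynomial σ K) (P : Ideal (MvPolynomial σ K))
    (hv : ∀ i, X i - v i ∈ P) (g : MvPolynomial σ K) : g - aeval v g ∈ P := by
  have : (Ideal.Quotient.mkₐ K P) = (Ideal.Quotient.mkₐ K P).comp (aeval v) := by
    apply MvPolynomial.algHom_ext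
    intro i
    simp only [Ideal.Quotient.mkₐ_eq_mk, AlgHom.comp_apply, aeval_X]
    rw [Ideal.Quotient.mk_eq_mk_iff_sub_mem]
    exact hv i
  have := congrFun (congrArg DFunLike.coe this) g
  simpa [Ideal.Quotient.mkₐ_eq_mk, Ideal.Quotient.mk_eq_mk_iff_sub_mem] using
    Ideal.Quotient.eq.mp this

lemma rename_mem_map_rename_iff {σ τ : Type*} (g : σ → τ) (hg : Function.Injective g)
    (N : Ideal (MvPolynomial σ K)) (h : MvPolynomial σ K) :
    rename g h ∈ Ideal.map (rename g : MvPolynomial σ K →ₐ[K] MvPolynomial τ K) N ↔ h ∈ N := by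
  constructor
  · intro hh
    have := Ideal.mem_map_of_mem (killCompl hg : MvPolynomial τ K →ₐ[K] MvPolynomial σ K) hh
    rw [killCompl_rename_app] at this
    rw [Ideal.map_mapₐ, killCompl_comp_rename] at this
    have he : Ideal.map (AlgHom.id K (MvPolynomial σ K)) N = N := by
      rw [Ideal.map]; simp [Ideal.span_eq]
    rwa [he] at this
  · exact fun hh => Ideal.mem_map_of_mem _ hh

/-- degree of an exponent vector -/
def edeg {σ : Type*} (s : σ →₀ ℕ) : ℕ := s.sum fun _ k => k

lemma edeg_add {σ : Type*} (s w : σ →₀ ℕ) : edeg (s + w) = edeg s + edeg w := by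
  classical
  simpa [edeg] using Finsupp.sum_add_index' (h := fun _ (k : ℕ) => k)
    (fun _ => rfl) (fun _ _ _ => rfl) (f := s) (g := w)

lemma edeg_single {σ : Type*} (i : σ) (k : ℕ) : edeg (Finsupp.single i k) = k := by
  simp [edeg, Finsupp.sum_single_index]

lemma edeg_eq_zero {σ : Type*} {s : σ →₀ ℕ} (h : edeg s = 0) : s = 0 := by
  classical
  ext i
  by_cases hi : i ∈ s.support
  · exact absurd (Finset.sum_eq_zero_iff.mp h i hi) (Finsupp.mem_support_iff.mp hi)
  · simpa using Finsupp.notMem_support_iff.mp hi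

/-- slice lemma: extract a sub-exponent of prescribed degree -/
lemma exists_le_of_le_edeg {σ : Type*} : ∀ (t : ℕ) (w : σ →₀ ℕ), t ≤ edeg w →
    ∃ s : σ →₀ ℕ, s ≤ w ∧ s.support ⊆ w.support ∧ edeg s = t := by
  intro t
  induction t with
  | zero => exact fun w _ => ⟨0, zero_le, by simp, rfl⟩
  | succ t ih =>
    intro w hw
    classical
    have hw0 : w ≠ 0 := by
      rintro rfl
      simp [edeg] at hw
    obtain ⟨i, hi⟩ := Finsupp.support_nonempty_iff.mpr hw0
    have h1 : Finsupp.single i 1 ≤ w :=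
      Finsupp.single_le_iff.mpr (Nat.one_le_iff_ne_zero.mpr (Finsupp.mem_support_iff.mp hi))
    set w' := w - Finsupp.single i 1 with hw'
    have hsum : w' + Finsupp.single i 1 = w := tsub_add_cancel_of_le h1
    have hdeg : edeg w' + 1 = edeg w := by
      have := edeg_add w' (Finsupp.single i 1)
      rw [hsum] at this
      simpa [edeg] using this.symm
    obtain ⟨s, hs1, hs2, hs3⟩ := ih w' (by omega)
    refine ⟨s + Finsupp.single i 1, ?_, ?_, ?_⟩
    · calc s + Finsupp.single i 1 ≤ w' + Finsupp.single i 1 := add_le_add_left hs1 _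
        _ = w := hsum
    · refine (Finsupp.support_add).trans ?_
      apply Finset.union_subset
      · exact hs2.trans ((hw' ▸ Finsupp.support_tsub).trans (subset_refl _))
      · intro j hj
        have : j = i := by simpa [Finsupp.support_single_ne_zero] using hj
        simpa [this] using hi
    · rw [edeg_add, hs3, edeg_single]

/-- powers of an ideal generated by a set of variables, as a monomial ideal -/
lemma span_X_image_pow {σ : Type*} [DecidableEq σ] (A : Set σ) (t : ℕ) :
    (Ideal.span ((X : σ → MvPolynomial σ K) '' A)) ^ t
      = Ideal.span ((fun s => monomial s (1 : K)) ''
          {s : σ →₀ ℕ | ↑s.support ⊆ A ∧ edeg s = t}) := by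
  induction t with
  | zero =>
    rw [pow_zero]
    have : {s : σ →₀ ℕ | ↑s.support ⊆ A ∧ edeg s = 0} = {0} := by
      ext s
      constructor
      · rintro ⟨-, h⟩; exact edeg_eq_zero h
      · rintro rfl; simp [edeg]
    rw [this]
    simp [Ideal.one_eq_top, Set.image_singleton, Ideal.span_singleton_eq_top]
  | succ t ih =>
    rw [pow_succ, ih]
    apply le_antisymm
    · rw [Ideal.span_mul_span', Ideal.span_le]
      rintro x hx
      rw [Set.mem_mul] at hx
      obtain ⟨a, ⟨s, ⟨hs1, hs2⟩, rfl⟩, b, ⟨i, hi, rfl⟩, rfl⟩ := hx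
      have : (monomial s (1:K)) * X i = monomial (s + Finsupp.single i 1) 1 := by
        rw [X, monomial_mul]; ring_nf
      rw [this]
      apply Ideal.subset_span
      refine ⟨s + Finsupp.single i 1, ⟨?_, ?_⟩, rfl⟩
      · refine (Finset.coe_subset.mpr Finsupp.support_add).trans ?_
        rw [Finset.coe_union]
        apply Set.union_subset hs1
        intro j hj
        have : j = i := by simpa [Finsupp.support_single_ne_zero] using hj
        simpa [this] using hi
      · rw [edeg_add, hs2, edeg_single]
    · rw [Ideal.span_le]
      rintro x ⟨s, ⟨hs1, hs2⟩, rfl⟩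
      have hs0 : s ≠ 0 := by
        rintro rfl
        simp [edeg] at hs2
      obtain ⟨i, hi⟩ := Finsupp.support_nonempty_iff.mpr hs0
      have h1 : Finsupp.single i 1 ≤ s :=
        Finsupp.single_le_iff.mpr (Nat.one_le_iff_ne_zero.mpr (Finsupp.mem_support_iff.mp hi))
      set s' := s - Finsupp.single i 1 with hs'
      have hsum : s' + Finsupp.single i 1 = s := tsub_add_cancel_of_le h1
      have hdeg : edeg s' + 1 = edeg s := by
        have := edeg_add s' (Finsupp.single i 1)
        rw [hsum] at this
        simpa [edeg] using this.symm
      have hmul : monomial s (1:K) = monomial s' 1 * X i := by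
        rw [X, monomial_mul, hsum]; ring_nf
      show (monomial s (1:K)) ∈ _
      rw [hmul]
      apply Ideal.mul_mem_mul
      · apply Ideal.subset_span
        refine ⟨s', ⟨?_, by omega⟩, rfl⟩
        exact (Finset.coe_subset.mpr (hs' ▸ Finsupp.support_tsub)).trans hs1
      · exact Ideal.subset_span ⟨i, hs1 hi, rfl⟩

lemma finset_prod_monomial {σ ι : Type*} (A : Finset ι) (g : ι → (σ →₀ ℕ)) (a : ι → K) :
    (∏ i ∈ A, (monomial (g i) (a i) : MvPolynomial σ K))
      = monomial (∑ i ∈ A, g i) (∏ i ∈ A, a i) := by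
  classical
  induction A using Finset.induction with
  | empty => simp [monomial_zero', C_1]
  | insert _ _ h ih =>
    rw [Finset.prod_insert h, Finset.sum_insert h, Finset.prod_insert h, ih, monomial_mul]

/-- evaluation of a polynomial under a monomial substitution -/
lemma aeval_monomial_subst {σ τ : Type*} [Fintype σ] (d : σ → (τ →₀ ℕ)) (u : σ → K)
    (f : MvPolynomial σ K) :
    aeval (fun i => (monomial (d i) (u i) : MvPolynomial τ K)) f
      = ∑ m ∈ f.support, monomial (m.sum fun i k => k • d i)
          (coeff m f * m.prod fun i k => u i ^ k) := by
  classical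
  conv_lhs => rw [f.as_sum]
  rw [map_sum]
  apply Finset.sum_congr rfl
  intro m hm
  rw [aeval_monomial]
  have : (m.prod fun i k => (monomial (d i) (u i) : MvPolynomial τ K) ^ k)
      = monomial (m.sum fun i k => k • d i) (m.prod fun i k => u i ^ k) := by
    rw [Finsupp.prod, Finsupp.sum, Finsupp.prod]
    rw [Finset.prod_congr rfl (fun i _ => monomial_pow)]
    exact finset_prod_monomial _ _ _
  rw [this, algebraMap_eq, C_mul_monomial]

lemma coeff_aeval_monomial_subst {σ τ : Type*} [Fintype σ] (d : σ → (τ →₀ ℕ)) (u : σ → K)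
    (hD : Function.Injective fun m : σ →₀ ℕ => m.sum fun i k => k • d i)
    (f : MvPolynomial σ K) (m₀ : σ →₀ ℕ) (hm₀ : m₀ ∈ f.support) :
    coeff (m₀.sum fun i k => k • d i)
        (aeval (fun i => (monomial (d i) (u i) : MvPolynomial τ K)) f)
      = coeff m₀ f * m₀.prod fun i k => u i ^ k := by
  classical
  rw [aeval_monomial_subst]
  rw [coeff_sum]
  rw [Finset.sum_eq_single m₀]
  · rw [coeff_monomial, if_pos rfl]
  · intro m _ hne
    rw [coeff_monomial, if_neg (fun h => hne (hD h))]
  · intro h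
    exact absurd hm₀ h

/-- membership of a monomial substitution in a monomial ideal -/
lemma aeval_monomial_subst_mem_span_iff {σ τ : Type*} [Fintype σ] (d : σ → (τ →₀ ℕ)) (u : σ → K)
    (hD : Function.Injective fun m : σ →₀ ℕ => m.sum fun i k => k • d i)
    (S : Set (τ →₀ ℕ)) (f : MvPolynomial σ K) :
    (aeval (fun i => (monomial (d i) (u i) : MvPolynomial τ K)) f
        ∈ Ideal.span ((fun s => monomial s (1 : K)) '' S))
      ↔ ∀ m ∈ f.support, (m.prod fun i k => u i ^ k) ≠ 0
          → ∃ s ∈ S, s ≤ m.sum fun i k => k • d i := by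
  classical
  constructor
  · intro hmem m hm hu
    have hc : coeff (m.sum fun i k => k • d i)
        (aeval (fun i => (monomial (d i) (u i) : MvPolynomial τ K)) f) ≠ 0 := by
      rw [coeff_aeval_monomial_subst d u hD f m hm]
      exact mul_ne_zero (mem_support_iff.mp hm) hu
    exact mem_ideal_span_monomial_image.mp hmem _ (mem_support_iff.mpr hc)
  · intro h
    rw [aeval_monomial_subst]
    apply Ideal.sum_mem
    intro m hm
    by_cases hu : (m.prod fun i k => u i ^ k) = 0
    · simp [hu]
    · obtain ⟨s, hsS, hs⟩ := h m hm hu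
      have : (monomial (m.sum fun i k => k • d i)
            (coeff m f * m.prod fun i k => u i ^ k) : MvPolynomial τ K)
          = monomial s 1 * monomial ((m.sum fun i k => k • d i) - s)
              (coeff m f * m.prod fun i k => u i ^ k) := by
        rw [monomial_mul, one_mul, add_tsub_cancel_of_le hs]
      rw [this]
      exact Ideal.mul_mem_right _ _ (Ideal.subset_span ⟨s, hsS, rfl⟩)

/-- the substitution `x_i ↦ y_i z_i` -/
def psi : MvPolynomial (Fin 3) K →ₐ[K] MvPolynomial (Fin 3 ⊕ Fin 3) K :=
  aeval (fun i => X (Sum.inl i) * X (Sum.inr i))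

lemma hadamard_mem_iff (I J : Ideal (MvPolynomial (Fin 3) K)) (f : MvPolynomial (Fin 3) K) :
    f ∈ hadamard I J ↔ psi f ∈
      Ideal.map (rename (Sum.inl : Fin 3 → Fin 3 ⊕ Fin 3)) I
        + Ideal.map (rename (Sum.inr : Fin 3 → Fin 3 ⊕ Fin 3)) J := by
  classical
  set σm : MvPolynomial (Fin 3 ⊕ (Fin 3 ⊕ Fin 3)) K →ₐ[K] MvPolynomial (Fin 3 ⊕ Fin 3) K :=
    aeval (Sum.elim (fun i => X (Sum.inl i) * X (Sum.inr i)) X) with hσm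
  set e : MvPolynomial (Fin 3 ⊕ (Fin 3 ⊕ Fin 3)) K →ₐ[K] MvPolynomial (Fin 3 ⊕ (Fin 3 ⊕ Fin 3)) K :=
    (rename Sum.inr).comp σm with he
  set A := Ideal.map (rename (fun i : Fin 3 =>
      (Sum.inr (Sum.inl i) : Fin 3 ⊕ (Fin 3 ⊕ Fin 3)))) I with hA
  set B := Ideal.map (rename (fun i : Fin 3 =>
      (Sum.inr (Sum.inr i) : Fin 3 ⊕ (Fin 3 ⊕ Fin 3)))) J with hB
  set D : Ideal (MvPolynomial (Fin 3 ⊕ (Fin 3 ⊕ Fin 3)) K) := Ideal.span { f | ∃ i : Fin 3,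
      f = X (Sum.inl i) - X (Sum.inr (Sum.inl i)) * X (Sum.inr (Sum.inr i)) } with hD
  have step1 : f ∈ hadamard I J ↔ e (rename Sum.inl f) ∈ A + B := by
    rw [hadamard, Ideal.mem_comap, ← hA, ← hB, ← hD, add_comm (A + B) D]
    apply mem_add_iff_of_retract e D (A + B)
    · -- h1
      have hev : e = aeval (Sum.elim
          (fun i => X (Sum.inr (Sum.inl i)) * X (Sum.inr (Sum.inr i)))
          (fun w => X (Sum.inr w))) := by
        apply MvPolynomial.algHom_ext
        rintro (i | w) <;> simp [he, hσm]
      rw [hev]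
      apply sub_aeval_mem
      rintro (i | w)
      · exact Ideal.subset_span ⟨i, rfl⟩
      · simp
    · -- h2 : map e D ≤ A + B
      rw [hD, Ideal.map_span, Ideal.span_le]
      rintro _ ⟨g, ⟨i, rfl⟩, rfl⟩
      have : e (X (Sum.inl i) - X (Sum.inr (Sum.inl i)) * X (Sum.inr (Sum.inr i))) = 0 := by
        simp [he, hσm]
      rw [this]
      exact zero_mem _
    · -- h3 : map e (A + B) ≤ A + B
      rw [Ideal.add_eq_sup, Ideal.map_sup]
      apply sup_le
      · rw [hA, Ideal.map_mapₐ]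
        have : e.comp (rename (fun i : Fin 3 => (Sum.inr (Sum.inl i) : Fin 3 ⊕ (Fin 3 ⊕ Fin 3))))
            = rename (fun i : Fin 3 => (Sum.inr (Sum.inl i) : Fin 3 ⊕ (Fin 3 ⊕ Fin 3))) := by
          apply MvPolynomial.algHom_ext
          intro i
          simp [he, hσm]
        rw [this]
        exact le_sup_of_le_left le_rfl
      · rw [hB, Ideal.map_mapₐ]
        have : e.comp (rename (fun i : Fin 3 => (Sum.inr (Sum.inr i) : Fin 3 ⊕ (Fin 3 ⊕ Fin 3))))
            = rename (fun i : Fin 3 => (Sum.inr (Sum.inr i) : Fin 3 ⊕ (Fin 3 ⊕ Fin 3))) := by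
          apply MvPolynomial.algHom_ext
          intro i
          simp [he, hσm]
        rw [this]
        exact le_sup_of_le_right le_rfl
  rw [step1]
  have key : e (rename Sum.inl f) = rename Sum.inr (psi f) := by
    have : (e.comp (rename Sum.inl) : MvPolynomial (Fin 3) K →ₐ[K] _)
        = (rename Sum.inr).comp psi := by
      apply MvPolynomial.algHom_ext
      intro i
      simp [he, hσm, psi]
    exact DFunLike.congr_fun this f
  rw [key]
  have hAB : A + B = Ideal.map (rename (Sum.inr : (Fin 3 ⊕ Fin 3) → Fin 3 ⊕ (Fin 3 ⊕ Fin 3)))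
      (Ideal.map (rename (Sum.inl : Fin 3 → Fin 3 ⊕ Fin 3)) I
        + Ideal.map (rename (Sum.inr : Fin 3 → Fin 3 ⊕ Fin 3)) J) := by
    have hc : ∀ (g : Fin 3 → Fin 3 ⊕ Fin 3),
        ((rename (Sum.inr : Fin 3 ⊕ Fin 3 → Fin 3 ⊕ (Fin 3 ⊕ Fin 3))).comp (rename g)
          : MvPolynomial (Fin 3) K →ₐ[K] _) = rename (fun i => Sum.inr (g i)) := by
      intro g
      apply MvPolynomial.algHom_ext
      intro i
      simp
    rw [Ideal.add_eq_sup, Ideal.add_eq_sup, Ideal.map_sup, Ideal.map_mapₐ, Ideal.map_mapₐ,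
      hc Sum.inl, hc Sum.inr, hA, hB]
  rw [hAB]
  exact rename_mem_map_rename_iff _ Sum.inr_injective _ _

lemma ideal_pow_mono {R : Type*} [CommRing R] {I J : Ideal R} (h : I ≤ J) (n : ℕ) :
    I ^ n ≤ J ^ n := by
  induction n with
  | zero => simp
  | succ n ih => rw [pow_succ, pow_succ]; exact Ideal.mul_mono ih h

lemma map_irrelevant_pow (t : ℕ) :
    Ideal.map (rename (Sum.inr : Fin 3 → Fin 3 ⊕ Fin 3)) ((irrelevantIdeal K) ^ t)
      = (Ideal.span ((X : Fin 3 ⊕ Fin 3 → MvPolynomial (Fin 3 ⊕ Fin 3) K)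
          '' (Set.range Sum.inr))) ^ t := by
  rw [Ideal.map_pow, irrelevantIdeal, Ideal.map_span]
  congr 1
  rw [← Set.range_comp]
  have : (rename (Sum.inr : Fin 3 → Fin 3 ⊕ Fin 3)) ∘ (X : Fin 3 → MvPolynomial (Fin 3) K)
      = X ∘ Sum.inr := by
    funext i; simp
  rw [this, Set.range_comp]

lemma stage2 (p : Fin 3 → K) (t : ℕ) (v : Fin 3 → MvPolynomial (Fin 3 ⊕ Fin 3) K)
    (hvP : ∀ i, X (Sum.inl i) - v i ∈
      Ideal.map (rename (Sum.inl : Fin 3 → Fin 3 ⊕ Fin 3)) (pointIdeal p))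
    (hkill : ∀ i j, C (p j) * v i - C (p i) * v j = 0)
    (f : MvPolynomial (Fin 3) K) :
    (psi f ∈ Ideal.map (rename (Sum.inl : Fin 3 → Fin 3 ⊕ Fin 3)) (pointIdeal p)
        + Ideal.map (rename (Sum.inr : Fin 3 → Fin 3 ⊕ Fin 3)) ((irrelevantIdeal K) ^ t))
      ↔ aeval (fun i => v i * X (Sum.inr i)) f
          ∈ (Ideal.span ((X : Fin 3 ⊕ Fin 3 → MvPolynomial (Fin 3 ⊕ Fin 3) K)
              '' (Set.range Sum.inr))) ^ t := by
  classical
  set e : MvPolynomial (Fin 3 ⊕ Fin 3) K →ₐ[K] MvPolynomial (Fin 3 ⊕ Fin 3) K :=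
    aeval (Sum.elim v (fun w => X (Sum.inr w))) with he
  set P := Ideal.map (rename (Sum.inl : Fin 3 → Fin 3 ⊕ Fin 3)) (pointIdeal p) with hP
  set Q := Ideal.map (rename (Sum.inr : Fin 3 → Fin 3 ⊕ Fin 3)) ((irrelevantIdeal K) ^ t) with hQ
  have main := mem_add_iff_of_retract e P Q ?_ ?_ ?_ (psi f)
  · rw [main]
    have : e (psi f) = aeval (fun i => v i * X (Sum.inr i)) f := by
      have hcomp : (e.comp psi : MvPolynomial (Fin 3) K →ₐ[K] _)
          = aeval (fun i => v i * X (Sum.inr i)) := by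
        apply MvPolynomial.algHom_ext
        intro i
        simp [he, psi]
      exact DFunLike.congr_fun hcomp f
    rw [this, hQ, map_irrelevant_pow]
  · -- h1
    apply sub_aeval_mem
    rintro (i | w)
    · exact hvP i
    · simp
  · -- h2
    rw [hP, pointIdeal, Ideal.map_span, Ideal.map_span, Ideal.span_le]
    rintro _ ⟨_, ⟨g, ⟨i, j, rfl⟩, rfl⟩, rfl⟩
    have : e (rename Sum.inl (C (p j) * X i - C (p i) * X j))
        = C (p j) * v i - C (p i) * v j := by
      simp [he]
    rw [this, hkill i j]
    exact zero_mem _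
  · -- h3
    rw [hQ, map_irrelevant_pow, Ideal.map_pow]
    apply ideal_pow_mono
    rw [Ideal.map_span, Ideal.span_le]
    rintro _ ⟨_, ⟨_, ⟨w, rfl⟩, rfl⟩, rfl⟩
    have : e (X (Sum.inr w)) = X (Sum.inr w) := by simp [he]
    rw [this]
    exact Ideal.subset_span ⟨Sum.inr w, ⟨w, rfl⟩, rfl⟩

lemma edeg_sum3 (s : Fin 3 →₀ ℕ) : edeg s = s 0 + s 1 + s 2 := by
  rw [edeg, Finsupp.sum_fintype _ _ (fun _ => rfl)]
  simp [Fin.sum_univ_three]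

lemma edeg_sum6 (s : (Fin 3 ⊕ Fin 3) →₀ ℕ) :
    edeg s = (s (Sum.inl 0) + s (Sum.inl 1) + s (Sum.inl 2))
      + (s (Sum.inr 0) + s (Sum.inr 1) + s (Sum.inr 2)) := by
  rw [edeg, Finsupp.sum_fintype _ _ (fun _ => rfl)]
  simp [Fintype.sum_sum_type, Fin.sum_univ_three]

lemma sumD_apply {τ : Type*} (d : Fin 3 → (τ →₀ ℕ)) (m : Fin 3 →₀ ℕ) (vv : τ) :
    (m.sum fun i k => k • d i) vv = m 0 * d 0 vv + m 1 * d 1 vv + m 2 * d 2 vv := by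
  classical
  rw [Finsupp.sum_apply]
  rw [Finsupp.sum_fintype _ _ (fun i => by simp)]
  simp [Fin.sum_univ_three]

lemma sum_single_smul {σ : Type*} [DecidableEq σ] (m : σ →₀ ℕ) :
    (m.sum fun i k => k • Finsupp.single i 1) = m := by
  have h : ∀ (i : σ) (k : ℕ), k • Finsupp.single i (1 : ℕ) = Finsupp.single i k := fun i k => by
    rw [Finsupp.smul_single, smul_eq_mul, mul_one]
  simp_rw [h]
  exact Finsupp.sum_single m

lemma exists_mem_SZ_iff (t : ℕ) (μ : (Fin 3 ⊕ Fin 3) →₀ ℕ) :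
    (∃ s ∈ {s : (Fin 3 ⊕ Fin 3) →₀ ℕ |
        ↑s.support ⊆ Set.range (Sum.inr : Fin 3 → Fin 3 ⊕ Fin 3) ∧ edeg s = t}, s ≤ μ)
      ↔ t ≤ μ (Sum.inr 0) + μ (Sum.inr 1) + μ (Sum.inr 2) := by
  constructor
  · rintro ⟨s, ⟨hsupp, hdeg⟩, hle⟩
    have hz : ∀ i : Fin 3, s (Sum.inl i) = 0 := by
      intro i
      by_contra h
      obtain ⟨w, hw⟩ := hsupp (Finsupp.mem_support_iff.mpr h)
      exact Sum.inr_ne_inl hw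
    have := edeg_sum6 s
    rw [hdeg, hz, hz, hz] at this
    simp only [zero_add] at this
    calc t = s (Sum.inr 0) + s (Sum.inr 1) + s (Sum.inr 2) := this
      _ ≤ μ (Sum.inr 0) + μ (Sum.inr 1) + μ (Sum.inr 2) := by
          have h0 := hle (Sum.inr 0); have h1 := hle (Sum.inr 1); have h2 := hle (Sum.inr 2)
          omega
  · intro h
    classical
    set w₀ : (Fin 3 ⊕ Fin 3) →₀ ℕ := Finsupp.single (Sum.inr 0) (μ (Sum.inr 0))
      + Finsupp.single (Sum.inr 1) (μ (Sum.inr 1))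
      + Finsupp.single (Sum.inr 2) (μ (Sum.inr 2)) with hw₀
    have hw0supp : ↑w₀.support ⊆ Set.range (Sum.inr : Fin 3 → Fin 3 ⊕ Fin 3) := by
      rintro (i | w) hv
      · exfalso
        have : w₀ (Sum.inl i) = 0 := by
          simp [hw₀, Finsupp.single_apply]
        exact Finsupp.mem_support_iff.mp hv this
      · exact ⟨w, rfl⟩
    have hw0le : w₀ ≤ μ := by
      rw [Finsupp.le_def]
      rintro (i | j)
      · have : w₀ (Sum.inl i) = 0 := by simp [hw₀, Finsupp.single_apply]
        simp [this]
      · fin_cases j <;> simp [hw₀, Finsupp.single_apply]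
    have hdeg : t ≤ edeg w₀ := by
      rw [hw₀, edeg_add, edeg_add, edeg_single, edeg_single, edeg_single]
      exact h
    obtain ⟨s, hs1, hs2, hs3⟩ := exists_le_of_le_edeg t w₀ hdeg
    exact ⟨s, ⟨(Finset.coe_subset.mpr hs2).trans hw0supp, hs3⟩, hs1.trans hw0le⟩

lemma exists_mem_S12_iff (t : ℕ) (m : Fin 3 →₀ ℕ) :
    (∃ s ∈ {s : Fin 3 →₀ ℕ | ↑s.support ⊆ ({1, 2} : Set (Fin 3)) ∧ edeg s = t}, s ≤ m)
      ↔ t ≤ m 1 + m 2 := by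
  constructor
  · rintro ⟨s, ⟨hsupp, hdeg⟩, hle⟩
    have hz : s 0 = 0 := by
      by_contra h
      have := hsupp (Finsupp.mem_support_iff.mpr h)
      simp at this
    have := edeg_sum3 s
    rw [hdeg, hz] at this
    have h1 := hle 1; have h2 := hle 2
    omega
  · intro h
    classical
    set w₀ : Fin 3 →₀ ℕ := Finsupp.single 1 (m 1) + Finsupp.single 2 (m 2) with hw₀
    have hw0supp : ↑w₀.support ⊆ ({1, 2} : Set (Fin 3)) := by
      intro v hv
      by_contra hv2
      have hne1 : v ≠ 1 := fun h => hv2 (by simp [h])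
      have hne2 : v ≠ 2 := fun h => hv2 (by simp [h])
      have : w₀ v = 0 := by
        simp [hw₀, Finsupp.single_apply, (Ne.symm hne1), (Ne.symm hne2)]
      exact Finsupp.mem_support_iff.mp hv this
    have hw0le : w₀ ≤ m := by
      rw [Finsupp.le_def]
      intro v
      fin_cases v <;> simp [hw₀, Finsupp.single_apply]
    have hdeg : t ≤ edeg w₀ := by
      rw [hw₀, edeg_add, edeg_single, edeg_single]
      exact h
    obtain ⟨s, hs1, hs2, hs3⟩ := exists_le_of_le_edeg t w₀ hdeg
    exact ⟨s, ⟨(Finset.coe_subset.mpr hs2).trans hw0supp, hs3⟩, hs1.trans hw0le⟩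

lemma finsupp_prod_pow_ne_zero_iff (u : Fin 3 → K) (m : Fin 3 →₀ ℕ) :
    (m.prod fun i k => u i ^ k) ≠ 0 ↔ ∀ i ∈ m.support, u i ≠ 0 := by
  rw [Finsupp.prod, Finset.prod_ne_zero_iff]
  apply forall_congr'
  intro i
  apply imp_congr_right
  intro hi
  exact pow_ne_zero_iff (Finsupp.mem_support_iff.mp hi)



lemma rhs1_iff (t : ℕ) (f : MvPolynomial (Fin 3) K) :
    f ∈ Ideal.span {(X 0 : MvPolynomial (Fin 3) K)}
        + (Ideal.span {(X 1 : MvPolynomial (Fin 3) K), X 2}) ^ t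
      ↔ ∀ m ∈ f.support, m 0 = 0 → t ≤ m 1 + m 2 := by
  classical
  set u : Fin 3 → K := ![0, 1, 1] with hu
  set e₀ : MvPolynomial (Fin 3) K →ₐ[K] MvPolynomial (Fin 3) K :=
    aeval (fun i => monomial (Finsupp.single i 1) (u i)) with he₀
  have step : f ∈ Ideal.span {(X 0 : MvPolynomial (Fin 3) K)}
      + (Ideal.span {(X 1 : MvPolynomial (Fin 3) K), X 2}) ^ t ↔ e₀ f ∈
        (Ideal.span {(X 1 : MvPolynomial (Fin 3) K), X 2}) ^ t := by
    apply mem_add_iff_of_retract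
    · apply sub_aeval_mem
      intro i
      fin_cases i
      · show (X 0 : MvPolynomial (Fin 3) K) - monomial (Finsupp.single 0 1) (u 0) ∈ _
        have : u 0 = 0 := by simp [hu]
        rw [this, monomial_zero, sub_zero]
        exact Ideal.subset_span rfl
      · show (X 1 : MvPolynomial (Fin 3) K) - monomial (Finsupp.single 1 1) (u 1) ∈ _
        have : u 1 = 1 := by simp [hu]
        rw [this, show (monomial (Finsupp.single (1 : Fin 3) 1) (1:K)) = X 1 from rfl, sub_self]
        exact zero_mem _
      · show (X 2 : MvPolynomial (Fin 3) K) - monomial (Finsupp.single 2 1) (u 2) ∈ _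
        have : u 2 = 1 := by simp [hu]
        rw [this, show (monomial (Finsupp.single (2 : Fin 3) 1) (1:K)) = X 2 from rfl, sub_self]
        exact zero_mem _
    · rw [Ideal.map_span, Ideal.span_le, Set.image_singleton]
      intro x hx
      rw [Set.mem_singleton_iff] at hx
      subst hx
      have : e₀ (X 0) = 0 := by simp [he₀, hu, monomial_zero]
      rw [this]; exact zero_mem _
    · rw [Ideal.map_pow]
      apply ideal_pow_mono
      rw [Ideal.map_span, Ideal.span_le]
      rintro _ ⟨x, hx, rfl⟩
      rcases hx with rfl | hx
      · have : e₀ (X 1) = X 1 := by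
          rw [he₀, aeval_X]
          have : u 1 = 1 := by simp [hu]
          rw [this]
          rfl
        rw [this]; exact Ideal.subset_span (by simp)
      · rw [Set.mem_singleton_iff] at hx; subst hx
        have : e₀ (X 2) = X 2 := by
          rw [he₀, aeval_X]
          have : u 2 = 1 := by simp [hu]
          rw [this]
          rfl
        rw [this]; exact Ideal.subset_span (by simp)
  rw [step]
  have himg : ({(X 1 : MvPolynomial (Fin 3) K), X 2} : Set _)
      = X '' ({1, 2} : Set (Fin 3)) := by
    rw [Set.image_insert_eq, Set.image_singleton]
  rw [himg, span_X_image_pow, he₀]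
  rw [aeval_monomial_subst_mem_span_iff _ _
    (by intro a b hab; simpa [sum_single_smul] using hab)]
  apply forall_congr'
  intro m
  apply imp_congr_right
  intro _
  have hA : ((m.prod fun i k => u i ^ k) ≠ 0) ↔ m 0 = 0 := by
    rw [finsupp_prod_pow_ne_zero_iff]
    constructor
    · intro h
      by_contra h0
      exact (h 0 (Finsupp.mem_support_iff.mpr h0)) (by simp [hu])
    · intro h0 i hi
      fin_cases i
      · exact absurd h0 (Finsupp.mem_support_iff.mp hi)
      · simp [hu]
      · simp [hu]
  have hB : (∃ s ∈ {s : Fin 3 →₀ ℕ | ↑s.support ⊆ ({1, 2} : Set (Fin 3)) ∧ edeg s = t},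
      s ≤ m.sum fun i k => k • Finsupp.single i 1) ↔ t ≤ m 1 + m 2 := by
    rw [sum_single_smul]
    exact exists_mem_S12_iff t m
  exact imp_congr hA hB

lemma rhs2_iff (t : ℕ) (f : MvPolynomial (Fin 3) K) :
    f ∈ Ideal.span {(X 0 : MvPolynomial (Fin 3) K), X 1}
        + Ideal.span {(X 2 : MvPolynomial (Fin 3) K) ^ t}
      ↔ ∀ m ∈ f.support, (m 0 = 0 ∧ m 1 = 0) → t ≤ m 2 := by
  classical
  set u : Fin 3 → K := ![0, 0, 1] with hu
  set e₀ : MvPolynomial (Fin 3) K →ₐ[K] MvPolynomial (Fin 3) K :=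
    aeval (fun i => monomial (Finsupp.single i 1) (u i)) with he₀
  have step : f ∈ Ideal.span {(X 0 : MvPolynomial (Fin 3) K), X 1}
      + Ideal.span {(X 2 : MvPolynomial (Fin 3) K) ^ t} ↔ e₀ f ∈
        Ideal.span {(X 2 : MvPolynomial (Fin 3) K) ^ t} := by
    apply mem_add_iff_of_retract
    · apply sub_aeval_mem
      intro i
      fin_cases i
      · show (X 0 : MvPolynomial (Fin 3) K) - monomial (Finsupp.single 0 1) (u 0) ∈ _
        have : u 0 = 0 := by simp [hu]
        rw [this, monomial_zero, sub_zero]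
        exact Ideal.subset_span (by simp)
      · show (X 1 : MvPolynomial (Fin 3) K) - monomial (Finsupp.single 1 1) (u 1) ∈ _
        have : u 1 = 0 := by simp [hu]
        rw [this, monomial_zero, sub_zero]
        exact Ideal.subset_span (by simp)
      · show (X 2 : MvPolynomial (Fin 3) K) - monomial (Finsupp.single 2 1) (u 2) ∈ _
        have : u 2 = 1 := by simp [hu]
        rw [this, show (monomial (Finsupp.single (2 : Fin 3) 1) (1:K)) = X 2 from rfl, sub_self]
        exact zero_mem _
    · rw [Ideal.map_span, Ideal.span_le]
      rintro _ ⟨x, hx, rfl⟩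
      rcases hx with rfl | hx
      · have : e₀ (X 0) = 0 := by
          rw [he₀, aeval_X]
          have : u 0 = 0 := by simp [hu]
          rw [this, monomial_zero]
        rw [this]; exact zero_mem _
      · rw [Set.mem_singleton_iff] at hx; subst hx
        have : e₀ (X 1) = 0 := by
          rw [he₀, aeval_X]
          have : u 1 = 0 := by simp [hu]
          rw [this, monomial_zero]
        rw [this]; exact zero_mem _
    · rw [Ideal.map_span, Ideal.span_le, Set.image_singleton]
      intro x hx
      rw [Set.mem_singleton_iff] at hx
      subst hx
      have h2 : e₀ (X 2) = X 2 := by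
        rw [he₀, aeval_X]
        have : u 2 = 1 := by simp [hu]
        rw [this]
        rfl
      rw [map_pow, h2]
      exact Ideal.subset_span rfl
  rw [step]
  have himg : ({(X 2 : MvPolynomial (Fin 3) K) ^ t} : Set _)
      = (fun s => monomial s (1 : K)) '' {Finsupp.single 2 t} := by
    rw [Set.image_singleton, X_pow_eq_monomial]
  rw [himg, he₀]
  rw [aeval_monomial_subst_mem_span_iff _ _
    (by intro a b hab; simpa [sum_single_smul] using hab)]
  apply forall_congr'
  intro m
  apply imp_congr_right
  intro _
  have hA : ((m.prod fun i k => u i ^ k) ≠ 0) ↔ (m 0 = 0 ∧ m 1 = 0) := by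
    rw [finsupp_prod_pow_ne_zero_iff]
    constructor
    · intro h
      constructor
      · by_contra h0
        exact (h 0 (Finsupp.mem_support_iff.mpr h0)) (by simp [hu])
      · by_contra h1
        exact (h 1 (Finsupp.mem_support_iff.mpr h1)) (by simp [hu])
    · rintro ⟨h0, h1⟩ i hi
      fin_cases i
      · exact absurd h0 (Finsupp.mem_support_iff.mp hi)
      · exact absurd h1 (Finsupp.mem_support_iff.mp hi)
      · simp [hu]
  have hB : (∃ s ∈ ({Finsupp.single 2 t} : Set (Fin 3 →₀ ℕ)),
      s ≤ m.sum fun i k => k • Finsupp.single i 1) ↔ t ≤ m 2 := by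
    rw [sum_single_smul]
    constructor
    · rintro ⟨s, hs, hle⟩
      rw [Set.mem_singleton_iff] at hs
      subst hs
      exact Finsupp.single_le_iff.mp hle
    · intro h
      exact ⟨Finsupp.single 2 t, rfl, Finsupp.single_le_iff.mpr h⟩
  exact imp_congr hA hB

lemma rename_inl_gen (a b : K) (i j : Fin 3) :
    rename (Sum.inl : Fin 3 → Fin 3 ⊕ Fin 3) (C a * X i - C b * X j)
      = C a * X (Sum.inl i) - C b * X (Sum.inl j) := by
  simp

lemma lhs1_iff (p₁ p₂ : K) (hp1 : p₁ ≠ 0) (hp2 : p₂ ≠ 0) (t : ℕ) (f : MvPolynomial (Fin 3) K) :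
    f ∈ hadamard (pointIdeal ![0, p₁, p₂]) ((irrelevantIdeal K) ^ t)
      ↔ ∀ m ∈ f.support, m 0 = 0 → t ≤ m 1 + m 2 := by
  classical
  rw [hadamard_mem_iff]
  obtain ⟨c, hc⟩ : ∃ c : K, c = p₂ * p₁⁻¹ := ⟨_, rfl⟩
  have hcne : c ≠ 0 := by rw [hc]; exact mul_ne_zero hp2 (inv_ne_zero hp1)
  set v : Fin 3 → MvPolynomial (Fin 3 ⊕ Fin 3) K :=
    ![0, X (Sum.inl 1), C c * X (Sum.inl 1)] with hv
  have hv0 : v 0 = 0 := rfl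
  have hv1 : v 1 = X (Sum.inl 1) := rfl
  have hv2 : v 2 = C c * X (Sum.inl 1) := rfl
  have hp0 : (![0, p₁, p₂] : Fin 3 → K) 0 = 0 := rfl
  have hpp1 : (![0, p₁, p₂] : Fin 3 → K) 1 = p₁ := rfl
  have hpp2 : (![0, p₁, p₂] : Fin 3 → K) 2 = p₂ := rfl
  have key : (C p₁ : MvPolynomial (Fin 3 ⊕ Fin 3) K) * C c = C p₂ := by
    rw [← C_mul, hc, mul_comm p₂ p₁⁻¹, ← mul_assoc, mul_inv_cancel₀ hp1, one_mul]
  have hvP : ∀ i, X (Sum.inl i) - v i ∈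
      Ideal.map (rename (Sum.inl : Fin 3 → Fin 3 ⊕ Fin 3)) (pointIdeal ![0, p₁, p₂]) := by
    intro i
    fin_cases i
    · show X (Sum.inl 0) - v 0 ∈ _
      have hmem : rename (Sum.inl : Fin 3 → Fin 3 ⊕ Fin 3)
            (C ((![0, p₁, p₂] : Fin 3 → K) 1) * X 0 - C ((![0, p₁, p₂] : Fin 3 → K) 0) * X 1)
          ∈ Ideal.map (rename (Sum.inl : Fin 3 → Fin 3 ⊕ Fin 3)) (pointIdeal ![0, p₁, p₂]) :=
        Ideal.mem_map_of_mem _ (Ideal.subset_span ⟨0, 1, rfl⟩)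
      have heq : X (Sum.inl 0) - v 0 = C p₁⁻¹ *
          rename (Sum.inl : Fin 3 → Fin 3 ⊕ Fin 3)
            (C ((![0, p₁, p₂] : Fin 3 → K) 1) * X 0 - C ((![0, p₁, p₂] : Fin 3 → K) 0) * X 1) := by
        rw [hv0, hp0, hpp1, rename_inl_gen, C_0, zero_mul, sub_zero, sub_zero,
          ← mul_assoc, ← C_mul, inv_mul_cancel₀ hp1, C_1, one_mul]
      rw [heq]
      exact Ideal.mul_mem_left _ _ hmem
    · show X (Sum.inl 1) - v 1 ∈ _
      rw [hv1, sub_self]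
      exact zero_mem _
    · show X (Sum.inl 2) - v 2 ∈ _
      have hmem : rename (Sum.inl : Fin 3 → Fin 3 ⊕ Fin 3)
            (C ((![0, p₁, p₂] : Fin 3 → K) 2) * X 1 - C ((![0, p₁, p₂] : Fin 3 → K) 1) * X 2)
          ∈ Ideal.map (rename (Sum.inl : Fin 3 → Fin 3 ⊕ Fin 3)) (pointIdeal ![0, p₁, p₂]) :=
        Ideal.mem_map_of_mem _ (Ideal.subset_span ⟨1, 2, rfl⟩)
      have heq : X (Sum.inl 2) - v 2 = C (-p₁⁻¹) *
          rename (Sum.inl : Fin 3 → Fin 3 ⊕ Fin 3)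
            (C ((![0, p₁, p₂] : Fin 3 → K) 2) * X 1 - C ((![0, p₁, p₂] : Fin 3 → K) 1) * X 2) := by
        rw [hv2, hpp1, hpp2, rename_inl_gen, mul_sub, ← mul_assoc, ← mul_assoc,
          ← C_mul, ← C_mul,
          show -p₁⁻¹ * p₂ = -c from by rw [hc]; ring,
          show -p₁⁻¹ * p₁ = -1 from by field_simp,
          map_neg, map_neg, C_1]
        ring
      rw [heq]
      exact Ideal.mul_mem_left _ _ hmem
  have hkill : ∀ i j, C ((![0, p₁, p₂] : Fin 3 → K) j) * v i
      - C ((![0, p₁, p₂] : Fin 3 → K) i) * v j = 0 := by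
    intro i j
    fin_cases i <;> fin_cases j <;>
      simp [hv, ← mul_assoc, key]
  rw [stage2 ![0, p₁, p₂] t v hvP hkill f]
  set d : Fin 3 → (Fin 3 ⊕ Fin 3) →₀ ℕ := ![Finsupp.single (Sum.inl 0) 1,
    Finsupp.single (Sum.inl 1) 1 + Finsupp.single (Sum.inr 1) 1,
    Finsupp.single (Sum.inl 1) 1 + Finsupp.single (Sum.inr 2) 1] with hd
  set uu : Fin 3 → K := ![0, 1, c] with huu
  have hd0 : d 0 = Finsupp.single (Sum.inl 0) 1 := rfl
  have hd1 : d 1 = Finsupp.single (Sum.inl 1) 1 + Finsupp.single (Sum.inr 1) 1 := rfl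
  have hd2 : d 2 = Finsupp.single (Sum.inl 1) 1 + Finsupp.single (Sum.inr 2) 1 := rfl
  have huu0 : uu 0 = 0 := rfl
  have huu1 : uu 1 = 1 := rfl
  have huu2 : uu 2 = c := rfl
  have hfun : (fun i => v i * X (Sum.inr i)) = fun i => monomial (d i) (uu i) := by
    funext i
    fin_cases i
    · show v 0 * X (Sum.inr 0) = monomial (d 0) (uu 0)
      rw [hv0, zero_mul, huu0, monomial_zero]
    · show v 1 * X (Sum.inr 1) = monomial (d 1) (uu 1)
      rw [hv1, huu1, hd1,
        show (X (Sum.inl 1) : MvPolynomial (Fin 3 ⊕ Fin 3) K)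
          = monomial (Finsupp.single (Sum.inl 1) 1) 1 from rfl,
        show (X (Sum.inr 1) : MvPolynomial (Fin 3 ⊕ Fin 3) K)
          = monomial (Finsupp.single (Sum.inr 1) 1) 1 from rfl,
        monomial_mul, one_mul]
    · show v 2 * X (Sum.inr 2) = monomial (d 2) (uu 2)
      rw [hv2, huu2, hd2, C_apply,
        show (X (Sum.inl 1) : MvPolynomial (Fin 3 ⊕ Fin 3) K)
          = monomial (Finsupp.single (Sum.inl 1) 1) 1 from rfl,
        show (X (Sum.inr 2) : MvPolynomial (Fin 3 ⊕ Fin 3) K)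
          = monomial (Finsupp.single (Sum.inr 2) 1) 1 from rfl,
        monomial_mul, monomial_mul, mul_one, mul_one, zero_add]
  have hDinj : Function.Injective (fun m : Fin 3 →₀ ℕ => m.sum fun i k => k • d i) := by
    intro a b hab
    have hab' : (a.sum fun i k => k • d i) = (b.sum fun i k => k • d i) := hab
    have h0 := DFunLike.congr_fun hab' (Sum.inl 0)
    have h1 := DFunLike.congr_fun hab' (Sum.inr 1)
    have h2 := DFunLike.congr_fun hab' (Sum.inr 2)
    rw [sumD_apply, sumD_apply] at h0 h1 h2
    simp [hd0, hd1, hd2, Finsupp.add_apply, Finsupp.single_apply] at h0 h1 h2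
    ext x
    fin_cases x
    · exact h0
    · exact h1
    · exact h2
  rw [hfun, span_X_image_pow, aeval_monomial_subst_mem_span_iff d uu hDinj]
  apply forall_congr'
  intro m
  apply imp_congr_right
  intro _
  have hA : ((m.prod fun i k => uu i ^ k) ≠ 0) ↔ m 0 = 0 := by
    rw [finsupp_prod_pow_ne_zero_iff]
    constructor
    · intro h
      by_contra h0
      exact (h 0 (Finsupp.mem_support_iff.mpr h0)) (by rw [huu0])
    · intro h0 i hi
      fin_cases i
      · exact absurd h0 (Finsupp.mem_support_iff.mp hi)
      · show uu 1 ≠ 0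
        rw [huu1]; exact one_ne_zero
      · show uu 2 ≠ 0
        rw [huu2]; exact hcne
  have e0 : (m.sum fun i k => k • d i) (Sum.inr 0) = 0 := by
    rw [sumD_apply]
    simp [hd0, hd1, hd2, Finsupp.add_apply, Finsupp.single_apply]
  have e1 : (m.sum fun i k => k • d i) (Sum.inr 1) = m 1 := by
    rw [sumD_apply]
    simp [hd0, hd1, hd2, Finsupp.add_apply, Finsupp.single_apply]
  have e2 : (m.sum fun i k => k • d i) (Sum.inr 2) = m 2 := by
    rw [sumD_apply]
    simp [hd0, hd1, hd2, Finsupp.add_apply, Finsupp.single_apply]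
  have hB := (exists_mem_SZ_iff t (m.sum fun i k => k • d i))
  rw [e0, e1, e2, zero_add] at hB
  exact imp_congr hA hB

lemma lhs2_iff (t : ℕ) (f : MvPolynomial (Fin 3) K) :
    f ∈ hadamard (pointIdeal ![(0 : K), 0, 1]) ((irrelevantIdeal K) ^ t)
      ↔ ∀ m ∈ f.support, (m 0 = 0 ∧ m 1 = 0) → t ≤ m 2 := by
  classical
  rw [hadamard_mem_iff]
  set v : Fin 3 → MvPolynomial (Fin 3 ⊕ Fin 3) K := ![0, 0, X (Sum.inl 2)] with hv
  have hv0 : v 0 = 0 := rfl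
  have hv1 : v 1 = 0 := rfl
  have hv2 : v 2 = X (Sum.inl 2) := rfl
  have hp0 : (![(0:K), 0, 1] : Fin 3 → K) 0 = 0 := rfl
  have hpp1 : (![(0:K), 0, 1] : Fin 3 → K) 1 = 0 := rfl
  have hpp2 : (![(0:K), 0, 1] : Fin 3 → K) 2 = 1 := rfl
  have hvP : ∀ i, X (Sum.inl i) - v i ∈
      Ideal.map (rename (Sum.inl : Fin 3 → Fin 3 ⊕ Fin 3)) (pointIdeal ![(0:K), 0, 1]) := by
    intro i
    fin_cases i
    · show X (Sum.inl 0) - v 0 ∈ _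
      have hmem : rename (Sum.inl : Fin 3 → Fin 3 ⊕ Fin 3)
            (C ((![(0:K), 0, 1] : Fin 3 → K) 2) * X 0 - C ((![(0:K), 0, 1] : Fin 3 → K) 0) * X 2)
          ∈ Ideal.map (rename (Sum.inl : Fin 3 → Fin 3 ⊕ Fin 3)) (pointIdeal ![(0:K), 0, 1]) :=
        Ideal.mem_map_of_mem _ (Ideal.subset_span ⟨0, 2, rfl⟩)
      have heq : X (Sum.inl 0) - v 0 = rename (Sum.inl : Fin 3 → Fin 3 ⊕ Fin 3)
          (C ((![(0:K), 0, 1] : Fin 3 → K) 2) * X 0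
            - C ((![(0:K), 0, 1] : Fin 3 → K) 0) * X 2) := by
        rw [hv0, hp0, hpp2, rename_inl_gen, C_0, C_1, zero_mul, one_mul, sub_zero]
      rw [heq]
      exact hmem
    · show X (Sum.inl 1) - v 1 ∈ _
      have hmem : rename (Sum.inl : Fin 3 → Fin 3 ⊕ Fin 3)
            (C ((![(0:K), 0, 1] : Fin 3 → K) 2) * X 1 - C ((![(0:K), 0, 1] : Fin 3 → K) 1) * X 2)
          ∈ Ideal.map (rename (Sum.inl : Fin 3 → Fin 3 ⊕ Fin 3)) (pointIdeal ![(0:K), 0, 1]) :=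
        Ideal.mem_map_of_mem _ (Ideal.subset_span ⟨1, 2, rfl⟩)
      have heq : X (Sum.inl 1) - v 1 = rename (Sum.inl : Fin 3 → Fin 3 ⊕ Fin 3)
          (C ((![(0:K), 0, 1] : Fin 3 → K) 2) * X 1
            - C ((![(0:K), 0, 1] : Fin 3 → K) 1) * X 2) := by
        rw [hv1, hpp1, hpp2, rename_inl_gen, C_0, C_1, zero_mul, one_mul, sub_zero]
      rw [heq]
      exact hmem
    · show X (Sum.inl 2) - v 2 ∈ _
      rw [hv2, sub_self]
      exact zero_mem _
  have hkill : ∀ i j, C ((![(0:K), 0, 1] : Fin 3 → K) j) * v i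
      - C ((![(0:K), 0, 1] : Fin 3 → K) i) * v j = 0 := by
    intro i j
    fin_cases i <;> fin_cases j <;> simp [hv]
  rw [stage2 ![(0:K), 0, 1] t v hvP hkill f]
  set d : Fin 3 → (Fin 3 ⊕ Fin 3) →₀ ℕ := ![Finsupp.single (Sum.inl 0) 1,
    Finsupp.single (Sum.inl 1) 1,
    Finsupp.single (Sum.inl 2) 1 + Finsupp.single (Sum.inr 2) 1] with hd
  set uu : Fin 3 → K := ![0, 0, 1] with huu
  have hd0 : d 0 = Finsupp.single (Sum.inl 0) 1 := rfl
  have hd1 : d 1 = Finsupp.single (Sum.inl 1) 1 := rfl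
  have hd2 : d 2 = Finsupp.single (Sum.inl 2) 1 + Finsupp.single (Sum.inr 2) 1 := rfl
  have huu0 : uu 0 = 0 := rfl
  have huu1 : uu 1 = 0 := rfl
  have huu2 : uu 2 = 1 := rfl
  have hfun : (fun i => v i * X (Sum.inr i)) = fun i => monomial (d i) (uu i) := by
    funext i
    fin_cases i
    · show v 0 * X (Sum.inr 0) = monomial (d 0) (uu 0)
      rw [hv0, zero_mul, huu0, monomial_zero]
    · show v 1 * X (Sum.inr 1) = monomial (d 1) (uu 1)
      rw [hv1, zero_mul, huu1, monomial_zero]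
    · show v 2 * X (Sum.inr 2) = monomial (d 2) (uu 2)
      rw [hv2, huu2, hd2,
        show (X (Sum.inl 2) : MvPolynomial (Fin 3 ⊕ Fin 3) K)
          = monomial (Finsupp.single (Sum.inl 2) 1) 1 from rfl,
        show (X (Sum.inr 2) : MvPolynomial (Fin 3 ⊕ Fin 3) K)
          = monomial (Finsupp.single (Sum.inr 2) 1) 1 from rfl,
        monomial_mul, one_mul]
  have hDinj : Function.Injective (fun m : Fin 3 →₀ ℕ => m.sum fun i k => k • d i) := by
    intro a b hab
    have hab' : (a.sum fun i k => k • d i) = (b.sum fun i k => k • d i) := hab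
    have h0 := DFunLike.congr_fun hab' (Sum.inl 0)
    have h1 := DFunLike.congr_fun hab' (Sum.inl 1)
    have h2 := DFunLike.congr_fun hab' (Sum.inl 2)
    rw [sumD_apply, sumD_apply] at h0 h1 h2
    simp [hd0, hd1, hd2, Finsupp.add_apply, Finsupp.single_apply] at h0 h1 h2
    ext x
    fin_cases x
    · exact h0
    · exact h1
    · exact h2
  rw [hfun, span_X_image_pow, aeval_monomial_subst_mem_span_iff d uu hDinj]
  apply forall_congr'
  intro m
  apply imp_congr_right
  intro _
  have hA : ((m.prod fun i k => uu i ^ k) ≠ 0) ↔ (m 0 = 0 ∧ m 1 = 0) := by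
    rw [finsupp_prod_pow_ne_zero_iff]
    constructor
    · intro h
      constructor
      · by_contra h0
        exact (h 0 (Finsupp.mem_support_iff.mpr h0)) (by rw [huu0])
      · by_contra h1
        exact (h 1 (Finsupp.mem_support_iff.mpr h1)) (by rw [huu1])
    · rintro ⟨h0, h1⟩ i hi
      fin_cases i
      · exact absurd h0 (Finsupp.mem_support_iff.mp hi)
      · exact absurd h1 (Finsupp.mem_support_iff.mp hi)
      · show uu 2 ≠ 0
        rw [huu2]; exact one_ne_zero
  have e0 : (m.sum fun i k => k • d i) (Sum.inr 0) = 0 := by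
    rw [sumD_apply]
    simp [hd0, hd1, hd2, Finsupp.add_apply, Finsupp.single_apply]
  have e1 : (m.sum fun i k => k • d i) (Sum.inr 1) = 0 := by
    rw [sumD_apply]
    simp [hd0, hd1, hd2, Finsupp.add_apply, Finsupp.single_apply]
  have e2 : (m.sum fun i k => k • d i) (Sum.inr 2) = m 2 := by
    rw [sumD_apply]
    simp [hd0, hd1, hd2, Finsupp.add_apply, Finsupp.single_apply]
  have hB := (exists_mem_SZ_iff t (m.sum fun i k => k • d i))
  rw [e0, e1, e2, zero_add, zero_add] at hB
  exact imp_congr hA hB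

/-- Let `t ≥ 1`. If `P = [0:p_1:p_2]` with `p_1 p_2 ≠ 0`, then
`I(P) ⋆ 𝔪^t = ⟨x_0⟩ + ⟨x_1,x_2⟩^t`; and if `P = [0:0:1]`, then
`I(P) ⋆ 𝔪^t = ⟨x_0,x_1⟩ + ⟨x_2^t⟩`. -/
theorem hadamard_pointIdeal_irrelevant_pow_of_zero_coords [IsAlgClosed K]
    (p₁ p₂ : K) (hp : p₁ * p₂ ≠ 0) (t : ℕ) (ht : 1 ≤ t) :
    hadamard (pointIdeal ![0, p₁, p₂]) ((irrelevantIdeal K) ^ t)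
        = Ideal.span {(X 0 : MvPolynomial (Fin 3) K)}
            + (Ideal.span {(X 1 : MvPolynomial (Fin 3) K), X 2}) ^ t ∧
    hadamard (pointIdeal ![(0 : K), 0, 1]) ((irrelevantIdeal K) ^ t)
        = Ideal.span {(X 0 : MvPolynomial (Fin 3) K), X 1}
            + Ideal.span {(X 2 : MvPolynomial (Fin 3) K) ^ t} := by
  have hp1 : p₁ ≠ 0 := fun h => hp (by rw [h, zero_mul])
  have hp2 : p₂ ≠ 0 := fun h => hp (by rw [h, mul_zero])
  constructor
  · ext f
    rw [lhs1_iff p₁ p₂ hp1 hp2 t f, rhs1_iff t f]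
  · ext f
    rw [lhs2_iff t f, rhs2_iff t f]
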